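/- Let λ > 0. For every x ∈ (−∞, −1) one has ζ_λ(x) > 0; consequently, if in addition 0 < λ ≤ 1, then for every x ∈ (−∞, −1) the iterates satisfy ζ_λ^n(x) → 0 as n → ∞. -/

import Mathlib

open Filter

/-- The real function `ζ_λ(x) = λ·x·e^{−x}/(x+1)`. -/
noncomputable def zeta (lam x : ℝ) : ℝ := lam * x * Real.exp (-x) / (x + 1)

theorem zeta_pos_on_Iio_neg_one_and_iterates_tendsto_zero (lam : ℝ) (hlam : 0 < lam) :
    (∀ x : ℝ, x < -1 → 0 < zeta lam x) ∧
      (lam ≤ 1 → ∀ x : ℝ, x < -1 →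
        Tendsto (fun n : ℕ => (zeta lam)^[n] x) atTop (nhds 0)) := by
  have hpos_neg : ∀ x : ℝ, x < -1 → 0 < zeta lam x := by
    intro x hx
    have hxneg : x < 0 := hx.trans (by norm_num)
    have hnum : lam * x * Real.exp (-x) < 0 :=
      mul_neg_of_neg_of_pos (mul_neg_of_pos_of_neg hlam hxneg) (Real.exp_pos _)
    have hden : x + 1 < 0 := by linarith
    exact div_pos_of_neg_of_neg hnum hden
  refine ⟨hpos_neg, fun hlam1 x hx => ?_⟩
  have hpos_pos : ∀ y : ℝ, 0 < y → 0 < zeta lam y := fun y hy =>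
    div_pos (mul_pos (mul_pos hlam hy) (Real.exp_pos _)) (by linarith)
  have hbound : ∀ y : ℝ, 0 < y → zeta lam y ≤ y / (y + 1) := by
    intro y hy
    have he : Real.exp (-y) ≤ 1 := Real.exp_le_one_iff.mpr (by linarith)
    have hepos : (0:ℝ) < Real.exp (-y) := Real.exp_pos _
    have h1 : lam * y * Real.exp (-y) ≤ y := by nlinarith [mul_pos hlam hy]
    have hden : (0:ℝ) < y + 1 := by linarith
    exact div_le_div_of_nonneg_right h1 hden.le |>.trans_eq rfl
  set a : ℕ → ℝ := fun n => (zeta lam)^[n + 1] x with ha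
  have ha0 : a 0 = zeta lam x := by simp [ha]
  have hasucc : ∀ n, a (n + 1) = zeta lam (a n) := by
    intro n
    simp only [ha]
    rw [Function.iterate_succ_apply']
  have ha0pos : 0 < a 0 := ha0 ▸ hpos_neg x hx
  have key : ∀ n : ℕ, 0 < a n ∧ (n : ℝ) + 1 / a 0 ≤ 1 / a n := by
    intro n
    induction n with
    | zero => exact ⟨ha0pos, by norm_num⟩
    | succ n ih =>
      obtain ⟨hpos, hle⟩ := ih
      have hnext : 0 < a (n + 1) := by rw [hasucc]; exact hpos_pos _ hpos
      refine ⟨hnext, ?_⟩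
      have hb : a (n + 1) ≤ a n / (a n + 1) := by rw [hasucc]; exact hbound _ hpos
      have h2 : 1 / (a n / (a n + 1)) ≤ 1 / a (n + 1) :=
        one_div_le_one_div_of_le hnext hb
      have h3 : 1 / (a n / (a n + 1)) = 1 / a n + 1 := by
        field_simp
        ring
      rw [h3] at h2
      push_cast
      linarith
  have hsq : ∀ n : ℕ, a n ≤ 1 / ((n : ℝ) + 1 / a 0) := by
    intro n
    obtain ⟨hpos, hle⟩ := key n
    have hc : (0:ℝ) < (n : ℝ) + 1 / a 0 := by positivity
    have := one_div_le_one_div_of_le hc hle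
    rwa [one_div_one_div] at this
  have htend : Tendsto a atTop (nhds 0) := by
    have hdenom : Tendsto (fun n : ℕ => (n : ℝ) + 1 / a 0) atTop atTop :=
      tendsto_atTop_add_const_right _ _ tendsto_natCast_atTop_atTop
    have h0 : Tendsto (fun n : ℕ => 1 / ((n : ℝ) + 1 / a 0)) atTop (nhds 0) := by
      simpa [one_div, Pi.inv_def] using hdenom.inv_tendsto_atTop
    exact squeeze_zero (fun n => (key n).1.le) hsq h0
  have : Tendsto (fun n : ℕ => (zeta lam)^[n + 1] x) atTop (nhds 0) := htend
  exact (tendsto_add_atTop_iff_nat 1).mp this
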